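/- arXiv:1401.0259 — 6 statements merged into one kernel-verified Lean document; each statement's English description precedes it below -/
import Mathlib

section
/- Let F_α(z) = z(1-αz)/(1-z²) for α ∈ [-1,1]. Then Re[(1-z²)·F_α'(z)] > 0 for all z in the open unit disk. -/
open Complex

theorem stmt_1 (α : ℝ) (hα : α ∈ Set.Icc (-1 : ℝ) 1) (z : ℂ) (hz : ‖z‖ < 1) :
    0 < ((1 - z ^ 2) *
      deriv (fun w : ℂ => w * (1 - (α : ℂ) * w) / (1 - w ^ 2)) z).re := by
  have hz2 : (1 : ℂ) - z ^ 2 ≠ 0 := by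
    intro h
    have : z ^ 2 = 1 := by linear_combination -h
    have h2 : ‖z ^ 2‖ = 1 := by rw [this]; simp
    rw [norm_pow] at h2
    nlinarith [norm_nonneg z]
  -- compute the derivative
  have h1 : HasDerivAt (fun w : ℂ => w * (1 - (α : ℂ) * w))
      (1 * (1 - (α : ℂ) * z) + z * (-((α : ℂ) * 1))) z :=
    (hasDerivAt_id z).mul (((hasDerivAt_id z).const_mul (α : ℂ)).const_sub 1)
  have h2 : HasDerivAt (fun w : ℂ => 1 - w ^ 2) (-((2 : ℕ) * z ^ 1)) z :=
    (hasDerivAt_pow 2 z).const_sub 1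
  have hd : deriv (fun w : ℂ => w * (1 - (α : ℂ) * w) / (1 - w ^ 2)) z = _ := (h1.div h2 hz2).deriv
  rw [hd]
  have key : (1 - z ^ 2) *
      (((1 * (1 - (α : ℂ) * z) + z * (-((α : ℂ) * 1))) * (1 - z ^ 2) -
        z * (1 - (α : ℂ) * z) * -((2 : ℕ) * z ^ 1)) / (1 - z ^ 2) ^ 2)
      = (1 + z ^ 2 - 2 * (α : ℂ) * z) / (1 - z ^ 2) := by
    field_simp
    ring
  rw [key]
  -- now the real-part estimate
  rw [Complex.div_re]
  set x := z.re with hx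
  set y := z.im with hy
  have hxy : x ^ 2 + y ^ 2 < 1 := by
    have := Complex.sq_norm z
    have h' : ‖z‖ < 1 := hz
    nlinarith [Complex.normSq_apply z, norm_nonneg z]
  have hns : 0 < Complex.normSq (1 - z ^ 2) := Complex.normSq_pos.2 hz2
  have hre : (1 + z ^ 2 - 2 * (α : ℂ) * z).re = 1 + x ^ 2 - y ^ 2 - 2 * α * x := by
    simp [Complex.add_re, Complex.sub_re, Complex.mul_re, pow_two]
    ring
  have him : (1 + z ^ 2 - 2 * (α : ℂ) * z).im = 2 * x * y - 2 * α * y := by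
    simp [Complex.add_im, Complex.sub_im, Complex.mul_im, pow_two]
    ring
  have hvre : (1 - z ^ 2 : ℂ).re = 1 - x ^ 2 + y ^ 2 := by
    simp [Complex.sub_re, pow_two, Complex.mul_re]
    ring
  have hvim : (1 - z ^ 2 : ℂ).im = -(2 * x * y) := by
    simp [Complex.sub_im, pow_two, Complex.mul_im]
    ring
  rw [hre, him, hvre, hvim]
  rw [← add_div, lt_div_iff₀ hns]
  have h1' : α ≤ 1 := hα.2
  have h2' : -1 ≤ α := hα.1
  nlinarith [sq_nonneg (x - α), sq_nonneg (x + α), sq_nonneg y, sq_nonneg (1 - α * x),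
    mul_pos (by nlinarith : (0:ℝ) < 1 - x ^ 2 - y ^ 2)
      (by nlinarith [sq_nonneg (x - α), sq_nonneg (x + α)] : (0:ℝ) < 1 + x ^ 2 + y ^ 2 - 2 * α * x)]
end

section
/- For θ ∈ (0,π), let F_θ(z) = (1/(2i sin θ)) log((1+ze^{iθ})/(1+ze^{-iθ})) on the unit disk. Then (1-z²)·F_θ'(z) = (1-z²)/((1+ze^{iθ})(1+ze^{-iθ})), and this function has positive real part for every z in the open unit disk. -/
open Complex Metric

theorem stmt_2 (θ : ℝ) (hθ : θ ∈ Set.Ioo 0 Real.pi) (F : ℂ → ℂ)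
    (hF : DifferentiableOn ℂ F (ball (0 : ℂ) 1)) (hF0 : F 0 = 0)
    (hbranch : ∀ z ∈ ball (0 : ℂ) 1,
      Complex.exp ((2 * Complex.I * (Real.sin θ : ℂ)) * F z) =
        (1 + z * Complex.exp (Complex.I * θ)) / (1 + z * Complex.exp (-(Complex.I * θ))))
    (z : ℂ) (hz : z ∈ ball (0 : ℂ) 1) :
    (1 - z ^ 2) * deriv F z =
      (1 - z ^ 2) /
        ((1 + z * Complex.exp (Complex.I * θ)) * (1 + z * Complex.exp (-(Complex.I * θ)))) ∧
    0 < ((1 - z ^ 2) /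
        ((1 + z * Complex.exp (Complex.I * θ)) * (1 + z * Complex.exp (-(Complex.I * θ))))).re := by
  obtain ⟨hθ0, hθπ⟩ := hθ
  have hs : 0 < Real.sin θ := Real.sin_pos_of_pos_of_lt_pi hθ0 hθπ
  set c : ℝ := Real.cos θ with hc
  set s : ℝ := Real.sin θ with hsdef
  have hcs : c ^ 2 + s ^ 2 = 1 := by
    rw [hc, hsdef, ← Real.cos_sq_add_sin_sq θ]
  have he : Complex.exp (Complex.I * θ) = (c : ℂ) + (s : ℂ) * Complex.I := by
    rw [mul_comm, Complex.exp_mul_I, ← Complex.ofReal_cos, ← Complex.ofReal_sin]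
  have he' : Complex.exp (-(Complex.I * θ)) = (c : ℂ) - (s : ℂ) * Complex.I := by
    rw [show -(Complex.I * (θ:ℂ)) = (-(θ:ℂ)) * Complex.I by ring,
      Complex.exp_mul_I, Complex.cos_neg, Complex.sin_neg, ← Complex.ofReal_cos,
      ← Complex.ofReal_sin]
    ring
  have habs : ∀ w : ℂ, ‖w‖ < 1 → 1 + w ≠ 0 := by
    intro w hw h
    have : w = -1 := by linear_combination h
    rw [this] at hw; simp at hw
  have hzabs : ‖z‖ < 1 := by simpa [Complex.dist_eq] using hz
  have habse : ‖Complex.exp (Complex.I * θ)‖ = 1 := by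
    rw [he]; simpa [Complex.norm_def, Complex.normSq_apply] using
      (by rw [show c * c + s * s = 1 by nlinarith]; exact Real.sqrt_one : Real.sqrt (c * c + s * s) = 1)
  have habse' : ‖Complex.exp (-(Complex.I * θ))‖ = 1 := by
    rw [he']
    simpa [Complex.norm_def, Complex.normSq_apply] using
      (by rw [show c * c + -s * -s = 1 by nlinarith]; exact Real.sqrt_one :
        Real.sqrt (c * c + -s * -s) = 1)
  have hu : 1 + z * Complex.exp (Complex.I * θ) ≠ 0 :=
    habs _ (by rw [norm_mul, habse]; simpa using hzabs)
  have hv : 1 + z * Complex.exp (-(Complex.I * θ)) ≠ 0 :=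
    habs _ (by rw [norm_mul, habse']; simpa using hzabs)
  have hsC : (s : ℂ) ≠ 0 := by exact_mod_cast hs.ne'
  have ha : (2 * Complex.I * (s : ℂ)) ≠ 0 := by
    exact mul_ne_zero (mul_ne_zero two_ne_zero Complex.I_ne_zero) hsC
  have hcsC : (c : ℂ) ^ 2 + (s : ℂ) ^ 2 = 1 := by exact_mod_cast congrArg (Complex.ofReal) hcs
  have hee : Complex.exp (Complex.I * θ) * Complex.exp (-(Complex.I * θ)) = 1 := by
    rw [he, he']; linear_combination hcsC + (-(s:ℂ)^2) * Complex.I_sq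
  -- derivative computation
  have hFz : HasDerivAt F (deriv F z) z :=
    (hF.differentiableAt (isOpen_ball.mem_nhds hz)).hasDerivAt
  have hL : HasDerivAt (fun w => Complex.exp ((2 * Complex.I * (s:ℂ)) * F w))
      (Complex.exp ((2 * Complex.I * (s:ℂ)) * F z) * ((2 * Complex.I * (s:ℂ)) * deriv F z)) z :=
    (hFz.const_mul _).cexp
  have hu' : HasDerivAt (fun w : ℂ => 1 + w * Complex.exp (Complex.I * θ))
      (Complex.exp (Complex.I * θ)) z := by
    simpa using ((hasDerivAt_id z).mul_const (Complex.exp (Complex.I * θ))).const_add 1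
  have hv' : HasDerivAt (fun w : ℂ => 1 + w * Complex.exp (-(Complex.I * θ)))
      (Complex.exp (-(Complex.I * θ))) z := by
    simpa using ((hasDerivAt_id z).mul_const (Complex.exp (-(Complex.I * θ)))).const_add 1
  have hR := hu'.div hv' hv
  have heq : (fun w => Complex.exp ((2 * Complex.I * (s:ℂ)) * F w)) =ᶠ[nhds z]
      (fun w => (1 + w * Complex.exp (Complex.I * θ)) / (1 + w * Complex.exp (-(Complex.I * θ)))) :=
    Filter.eventuallyEq_of_mem (isOpen_ball.mem_nhds hz) hbranch
  have hderiv := heq.deriv_eq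
  simp only [Pi.div_def] at hR
  rw [hL.deriv, hR.deriv] at hderiv
  rw [hbranch z hz] at hderiv
  have h1 : (1 - z ^ 2) * deriv F z =
      (1 - z ^ 2) /
        ((1 + z * Complex.exp (Complex.I * θ)) * (1 + z * Complex.exp (-(Complex.I * θ)))) := by
    rw [eq_div_iff (mul_ne_zero hu hv)]
    simp only [he, he'] at hderiv hv ⊢
    field_simp at hderiv
    have h2 : (2 * Complex.I * (s:ℂ) * (1 + z * ((c:ℂ) - s * Complex.I))) *
        (deriv F z * ((1 + z * ((c:ℂ) + s * Complex.I)) * (1 + z * ((c:ℂ) - s * Complex.I)))) =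
        (2 * Complex.I * (s:ℂ) * (1 + z * ((c:ℂ) - s * Complex.I))) * 1 := by
      linear_combination (1 + z * ((c:ℂ) - s * Complex.I)) * hderiv
    have key := mul_left_cancel₀ (mul_ne_zero ha hv) h2
    linear_combination (1 - z ^ 2) * key
  refine ⟨h1, ?_⟩
  have hD : (1 + z * Complex.exp (Complex.I * θ)) * (1 + z * Complex.exp (-(Complex.I * θ))) ≠ 0 :=
    mul_ne_zero hu hv
  have hD2 : (1 + z * Complex.exp (Complex.I * θ)) * (1 + z * Complex.exp (-(Complex.I * θ))) =
      1 + 2 * (c : ℂ) * z + z ^ 2 := by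
    rw [he, he']; linear_combination z ^ 2 * hcsC + (-(z ^ 2) * (s:ℂ) ^ 2) * Complex.I_sq
  rw [hD2] at hD ⊢
  rw [Complex.div_re, ← add_div]
  refine div_pos ?_ (Complex.normSq_pos.mpr hD)
  set x := z.re with hx
  set y := z.im with hy
  have hxy : x ^ 2 + y ^ 2 < 1 := by
    have h := Complex.sq_norm z
    rw [Complex.normSq_apply] at h
    nlinarith [norm_nonneg z]
  have hA : 0 < 1 - (x ^ 2 + y ^ 2) := by linarith
  have hB : 0 < 1 + x ^ 2 + y ^ 2 + 2 * c * x := by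
    nlinarith [sq_nonneg (x + c), sq_nonneg y, hs, sq_nonneg s]
  simp only [Complex.sub_re, Complex.sub_im, Complex.add_re, Complex.add_im, Complex.mul_re,
    Complex.mul_im, Complex.one_re, Complex.one_im, Complex.ofReal_re, Complex.ofReal_im,
    pow_two, ← hx, ← hy]
  norm_num
  nlinarith [mul_pos hA hB]
end

section
/- For every z in the open unit disk and every θ ∈ (0,π), Re[(1-z²)/((1+ze^{iθ})(1+ze^{-iθ}))] > 0. -/
open Complex

theorem stmt_3 (θ : ℝ) (hθ : θ ∈ Set.Ioo 0 Real.pi) (z : ℂ) (hz : ‖z‖ < 1) :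
    0 < ((1 - z ^ 2) /
      ((1 + z * Complex.exp (Complex.I * θ)) * (1 + z * Complex.exp (-(Complex.I * θ))))).re := by
  obtain ⟨hθ0, hθπ⟩ := hθ
  have hc1 : Real.cos θ < 1 := by
    have := Real.cos_lt_cos_of_nonneg_of_le_pi le_rfl (le_of_lt hθπ) hθ0
    simpa using this
  have hc2 : -1 < Real.cos θ := by
    have := Real.cos_lt_cos_of_nonneg_of_le_pi (le_of_lt hθ0) le_rfl hθπ
    simpa using this
  have he1 : Complex.exp (Complex.I * θ) = Real.cos θ + Real.sin θ * Complex.I := by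
    rw [mul_comm, Complex.exp_mul_I]; push_cast; ring
  have he2 : Complex.exp (-(Complex.I * θ)) = Real.cos θ - Real.sin θ * Complex.I := by
    have h : (starRingEnd ℂ) (Complex.I * θ) = -(Complex.I * θ) := by simp
    rw [← h, Complex.exp_conj, he1]
    simp [← Complex.ofReal_cos, ← Complex.ofReal_sin, Complex.conj_ofReal, sub_eq_add_neg]
  have hnorm1 : ‖Complex.exp (Complex.I * θ)‖ = 1 := by
    rw [Complex.norm_exp]
    simp
  have hnorm2 : ‖Complex.exp (-(Complex.I * θ))‖ = 1 := by
    rw [Complex.norm_exp]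
    simp
  have hd1 : (1 + z * Complex.exp (Complex.I * θ)) ≠ 0 := by
    intro h
    have h1 : z * Complex.exp (Complex.I * θ) = -1 := by linear_combination h
    have h2 : ‖z * Complex.exp (Complex.I * θ)‖ = 1 := by rw [h1]; simp
    rw [norm_mul, hnorm1, mul_one] at h2
    linarith
  have hd2 : (1 + z * Complex.exp (-(Complex.I * θ))) ≠ 0 := by
    intro h
    have h1 : z * Complex.exp (-(Complex.I * θ)) = -1 := by linear_combination h
    have h2 : ‖z * Complex.exp (-(Complex.I * θ))‖ = 1 := by rw [h1]; simp
    rw [norm_mul, hnorm2, mul_one] at h2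
    linarith
  have hns : 0 < Complex.normSq ((1 + z * Complex.exp (Complex.I * θ)) *
      (1 + z * Complex.exp (-(Complex.I * θ)))) :=
    Complex.normSq_pos.mpr (mul_ne_zero hd1 hd2)
  set x := z.re with hx
  set y := z.im with hy
  have hz2 : x ^ 2 + y ^ 2 < 1 := by
    have h1 : ‖z‖ ^ 2 = x ^ 2 + y ^ 2 := by
      rw [Complex.sq_norm, Complex.normSq_apply]; ring
    have h2 : ‖z‖ ^ 2 < 1 := by
      have : ‖z‖ < 1 := hz
      nlinarith [norm_nonneg z]
    linarith
  set c := Real.cos θ with hc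
  set s := Real.sin θ with hs
  have hcs : s ^ 2 + c ^ 2 = 1 := Real.sin_sq_add_cos_sq θ
  rw [he1, he2] at hns ⊢
  rw [Complex.div_re, ← add_div]
  apply div_pos ?_ hns
  have h1 : 0 < 1 - x ^ 2 - y ^ 2 := by linarith
  have h2 : 0 < 1 + x ^ 2 + y ^ 2 + 2 * x * c := by nlinarith [sq_nonneg (x + c)]
  have hprod : 0 < (1 - x ^ 2 - y ^ 2) * (1 + x ^ 2 + y ^ 2 + 2 * x * c) := mul_pos h1 h2
  have e1 : x ^ 2 * s ^ 2 + x ^ 2 * c ^ 2 = x ^ 2 := by linear_combination x ^ 2 * hcs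
  have e2 : y ^ 2 * s ^ 2 + y ^ 2 * c ^ 2 = y ^ 2 := by linear_combination y ^ 2 * hcs
  have e3 : x ^ 2 * y ^ 2 * s ^ 2 + x ^ 2 * y ^ 2 * c ^ 2 = x ^ 2 * y ^ 2 := by
    linear_combination x ^ 2 * y ^ 2 * hcs
  have e4 : x ^ 4 * s ^ 2 + x ^ 4 * c ^ 2 = x ^ 4 := by linear_combination x ^ 4 * hcs
  have e5 : y ^ 4 * s ^ 2 + y ^ 4 * c ^ 2 = y ^ 4 := by linear_combination y ^ 4 * hcs
  simp only [Complex.mul_re, Complex.mul_im, Complex.add_re, Complex.add_im,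
    Complex.sub_re, Complex.sub_im, Complex.one_re, Complex.one_im, Complex.I_re,
    Complex.I_im, Complex.ofReal_re, Complex.ofReal_im, pow_two]
  ring_nf
  nlinarith [hprod, e1, e2, e3, e4, e5, hcs]
end

section
/- Let f be holomorphic and nonconstant on the open unit disk E with Re[(1-z²)f'(z)] ≥ 0 for all z ∈ E. Then f is injective on E. -/
open Complex Metric

noncomputable def myAtanh (z : ℂ) : ℂ := (1/2 : ℂ) * Complex.log ((1 + z)/(1 - z))

lemma hs6_one_sub_ne (z : ℂ) (hz : z ∈ ball (0:ℂ) 1) : (1 - z) ≠ 0 := by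
  simp only [mem_ball, dist_zero_right] at hz
  intro h
  have : z = 1 := by linear_combination -h
  simp [this] at hz

lemma hs6_one_add_ne (z : ℂ) (hz : z ∈ ball (0:ℂ) 1) : (1 + z) ≠ 0 := by
  simp only [mem_ball, dist_zero_right] at hz
  intro h
  have : z = -1 := by linear_combination h
  simp [this] at hz

lemma hs6_exp_two_sub (w : ℂ) :
    Complex.exp (2*w) - 1 = 2 * Complex.exp w * Complex.sinh w := by
  rw [Complex.sinh]
  have h1 : Complex.exp w * Complex.exp w = Complex.exp (2*w) := by
    rw [← Complex.exp_add]; ring_nf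
  have h2 : Complex.exp w * Complex.exp (-w) = 1 := by
    rw [← Complex.exp_add]; simp
  field_simp
  linear_combination h2 - h1

lemma hs6_exp_two_add (w : ℂ) :
    Complex.exp (2*w) + 1 = 2 * Complex.exp w * Complex.cosh w := by
  rw [Complex.cosh]
  have h1 : Complex.exp w * Complex.exp w = Complex.exp (2*w) := by
    rw [← Complex.exp_add]; ring_nf
  have h2 : Complex.exp w * Complex.exp (-w) = 1 := by
    rw [← Complex.exp_add]; simp
  field_simp
  linear_combination -h2 - h1

lemma hs6_tanh_eq (w : ℂ) :
    Complex.tanh w = (Complex.exp (2*w) - 1)/(Complex.exp (2*w) + 1) := by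
  rw [Complex.tanh_eq_sinh_div_cosh, hs6_exp_two_sub, hs6_exp_two_add,
    mul_div_mul_left _ _ (mul_ne_zero two_ne_zero (Complex.exp_ne_zero w))]

lemma hs6_mul_two_im (w : ℂ) : ((2:ℂ)*w).im = 2 * w.im := by
  simp [Complex.mul_im]

lemma hs6_exp_re_pos {w : ℂ} (h : |w.im| < Real.pi/4) : 0 < (Complex.exp (2*w)).re := by
  rw [Complex.exp_re, hs6_mul_two_im]
  apply mul_pos (Real.exp_pos _)
  apply Real.cos_pos_of_mem_Ioo
  have := abs_lt.mp h
  constructor <;> [nlinarith [this.1]; nlinarith [this.2]]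

lemma hs6_cosh_ne_zero {w : ℂ} (h : |w.im| < Real.pi/4) : Complex.cosh w ≠ 0 := by
  intro hc
  have h2 : Complex.exp (2*w) + 1 = 0 := by
    rw [hs6_exp_two_add, hc, mul_zero]
  have h3 := hs6_exp_re_pos h
  have : (Complex.exp (2*w)).re = -1 := by
    have : Complex.exp (2*w) = -1 := by linear_combination h2
    simp [this]
  linarith

lemma hs6_tanh_mem_ball {w : ℂ} (h : |w.im| < Real.pi/4) :
    Complex.tanh w ∈ ball (0:ℂ) 1 := by
  have hre := hs6_exp_re_pos h
  set u := Complex.exp (2*w) with hu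
  have hden : u + 1 ≠ 0 := by
    intro h0
    have : u = -1 := by linear_combination h0
    rw [this] at hre; norm_num at hre
  simp only [mem_ball, dist_zero_right]
  rw [hs6_tanh_eq, ← hu, norm_div, div_lt_one (norm_pos_iff.mpr hden)]
  have hsq : (‖u - 1‖)^2 < (‖u + 1‖)^2 := by
    rw [Complex.sq_norm, Complex.sq_norm, Complex.normSq_apply, Complex.normSq_apply]
    simp only [Complex.sub_re, Complex.sub_im, Complex.add_re, Complex.add_im,
      Complex.one_re, Complex.one_im]
    nlinarith
  nlinarith [norm_nonneg (u - 1), norm_nonneg (u + 1)]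

lemma hs6_exp_atanh {z : ℂ} (hz : z ∈ ball (0:ℂ) 1) :
    Complex.exp (2 * myAtanh z) = (1 + z)/(1 - z) := by
  have h1 := hs6_one_sub_ne z hz
  have h2 := hs6_one_add_ne z hz
  have : 2 * myAtanh z = Complex.log ((1 + z)/(1 - z)) := by
    rw [myAtanh]; ring
  rw [this, Complex.exp_log (div_ne_zero h2 h1)]

lemma hs6_tanh_atanh {z : ℂ} (hz : z ∈ ball (0:ℂ) 1) :
    Complex.tanh (myAtanh z) = z := by
  have h1 := hs6_one_sub_ne z hz
  rw [hs6_tanh_eq, hs6_exp_atanh hz]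
  have hden : (1 + z)/(1 - z) + 1 ≠ 0 := by
    rw [div_add' _ _ _ h1]
    apply div_ne_zero _ h1
    intro h0
    have : (2:ℂ) = 0 := by linear_combination h0
    norm_num at this
  field_simp
  ring

lemma hs6_atanh_im {z : ℂ} (hz : z ∈ ball (0:ℂ) 1) :
    |(myAtanh z).im| < Real.pi/4 := by
  have h1 := hs6_one_sub_ne z hz
  have hre : 0 < ((1 + z)/(1 - z)).re := by
    rw [Complex.div_re]
    have hns : 0 < Complex.normSq (1 - z) := by
      rwa [Complex.normSq_pos]
    rw [← add_div, lt_div_iff₀ hns]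
    simp only [Complex.add_re, Complex.add_im, Complex.sub_re, Complex.sub_im,
      Complex.one_re, Complex.one_im]
    have hz' : Complex.normSq z < 1 := by
      simp only [mem_ball, dist_zero_right] at hz
      rw [← Complex.sq_norm]
      nlinarith [norm_nonneg z]
    rw [Complex.normSq_apply] at hz'
    nlinarith
  have harg : |Complex.arg ((1 + z)/(1 - z))| < Real.pi/2 :=
    Complex.abs_arg_lt_pi_div_two_iff.mpr (Or.inl hre)
  have him : (myAtanh z).im = (1/2) * Complex.arg ((1 + z)/(1 - z)) := by
    rw [myAtanh]
    simp [Complex.mul_im, Complex.log_im]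
  rw [him, abs_mul]
  rw [_root_.abs_of_nonneg (by norm_num : (0:ℝ) ≤ 1/2)]
  linarith

lemma hs6_hasDerivAt_tanh {w : ℂ} (hc : Complex.cosh w ≠ 0) :
    HasDerivAt Complex.tanh (1 - Complex.tanh w ^ 2) w := by
  have h := (Complex.hasDerivAt_sinh w).div (Complex.hasDerivAt_cosh w) hc
  have htf : (Complex.sinh / Complex.cosh) = Complex.tanh := by
    funext y; rw [Pi.div_apply, Complex.tanh_eq_sinh_div_cosh]
  rw [htf] at h
  refine h.congr_deriv ?_
  symm
  rw [Complex.tanh_eq_sinh_div_cosh]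
  have := Complex.cosh_sq_sub_sinh_sq w
  field_simp

/-- Open mapping dichotomy: a holomorphic function on the unit ball with nonnegative
real part either has strictly positive real part everywhere or is constant. -/
lemma hs6_pos_or_const {h : ℂ → ℂ} (hd : DifferentiableOn ℂ h (ball (0:ℂ) 1))
    (hre : ∀ z ∈ ball (0:ℂ) 1, 0 ≤ (h z).re) :
    (∀ z ∈ ball (0:ℂ) 1, 0 < (h z).re) ∨ ∃ c, ∀ z ∈ ball (0:ℂ) 1, h z = c := by
  have ha : AnalyticOnNhd ℂ h (ball (0:ℂ) 1) := hd.analyticOnNhd isOpen_ball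
  rcases ha.is_constant_or_isOpen (convex_ball (0:ℂ) 1).isPreconnected with hconst | hopen
  · exact Or.inr hconst
  · left
    intro z hz
    rcases lt_or_eq_of_le (hre z hz) with hpos | heq
    · exact hpos
    · exfalso
      have himg : IsOpen (h '' ball (0:ℂ) 1) := hopen _ le_rfl isOpen_ball
      have hmem : h z ∈ h '' ball (0:ℂ) 1 := ⟨z, hz, rfl⟩
      rcases Metric.isOpen_iff.mp himg _ hmem with ⟨ε, hε, hball⟩
      have : h z - ε/2 ∈ h '' ball (0:ℂ) 1 := by
        apply hball
        simp only [mem_ball, dist_eq_norm]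
        have : h z - ε/2 - h z = -(ε/2 : ℂ) := by ring
        rw [this]
        simp [abs_of_pos hε]
        linarith
      rcases this with ⟨z', hz', hz'eq⟩
      have : (h z').re = -(ε/2) := by
        rw [hz'eq]
        simp [← heq]
      have := hre z' hz'
      linarith

theorem stmt_6 (f : ℂ → ℂ) (hf : DifferentiableOn ℂ f (ball (0 : ℂ) 1))
    (hnc : ¬ ∃ c : ℂ, ∀ z ∈ ball (0 : ℂ) 1, f z = c)
    (hre : ∀ z ∈ ball (0 : ℂ) 1, 0 ≤ ((1 - z ^ 2) * deriv f z).re) :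
    Set.InjOn f (ball (0 : ℂ) 1) := by
  set h : ℂ → ℂ := fun z => (1 - z ^ 2) * deriv f z with hh
  -- analytic facts
  have hA : AnalyticOnNhd ℂ f (ball (0:ℂ) 1) := hf.analyticOnNhd isOpen_ball
  have hAd : AnalyticOnNhd ℂ (deriv f) (ball (0:ℂ) 1) := hA.deriv
  have hAh : DifferentiableOn ℂ h (ball (0:ℂ) 1) := by
    apply DifferentiableOn.mul _ hAd.differentiableOn
    fun_prop
  have hch : ContinuousOn h (ball (0:ℂ) 1) := by
    apply ContinuousOn.mul _ hAd.continuousOn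
    fun_prop
  intro z₁ hz₁ z₂ hz₂ hfz
  by_contra hne
  set w₁ := myAtanh z₁ with hw₁
  set w₂ := myAtanh z₂ with hw₂
  set d := w₂ - w₁ with hd'
  have hd : d ≠ 0 := by
    intro h0
    apply hne
    have : w₁ = w₂ := by rw [hd', sub_eq_zero] at h0; exact h0.symm
    rw [← hs6_tanh_atanh hz₁, ← hs6_tanh_atanh hz₂, ← hw₁, ← hw₂, this]
  -- the path
  set c : ℝ → ℂ := fun t => w₁ + (t:ℂ) * d with hc
  set γ : ℝ → ℂ := fun t => Complex.tanh (c t) with hγ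
  have hkey : ∀ t : ℝ, t ∈ Set.Icc (0:ℝ) 1 → |(c t).im| < Real.pi/4 := by
    rintro t ⟨ht0, ht1⟩
    have him : (c t).im = (1 - t) * w₁.im + t * w₂.im := by
      simp only [hc, Complex.add_im, Complex.mul_im, Complex.ofReal_re,
        Complex.ofReal_im, hd', Complex.sub_im]
      ring
    have h1 : |w₁.im| < Real.pi/4 := hs6_atanh_im hz₁
    have h2 : |w₂.im| < Real.pi/4 := hs6_atanh_im hz₂
    set m := max |w₁.im| |w₂.im| with hm
    have hm1 : |w₁.im| ≤ m := le_max_left _ _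
    have hm2 : |w₂.im| ≤ m := le_max_right _ _
    have hm0 : (0:ℝ) ≤ m := le_trans (abs_nonneg _) hm1
    rw [him]
    calc |(1 - t) * w₁.im + t * w₂.im|
        ≤ (1 - t) * |w₁.im| + t * |w₂.im| := by
          refine (abs_add_le _ _).trans ?_
          rw [abs_mul, abs_mul, _root_.abs_of_nonneg (by linarith : (0:ℝ) ≤ 1 - t),
            _root_.abs_of_nonneg ht0]
      _ ≤ (1 - t) * m + t * m := by
          apply add_le_add
          · exact mul_le_mul_of_nonneg_left hm1 (by linarith)
          · exact mul_le_mul_of_nonneg_left hm2 ht0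
      _ = m := by ring
      _ < Real.pi/4 := max_lt h1 h2
  have hγmem : ∀ t : ℝ, t ∈ Set.Icc (0:ℝ) 1 → γ t ∈ ball (0:ℂ) 1 := fun t ht =>
    hs6_tanh_mem_ball (hkey t ht)
  -- derivative of f ∘ γ
  have hderiv : ∀ t ∈ Set.uIcc (0:ℝ) 1,
      HasDerivAt (fun t => f (γ t)) (h (γ t) * d) t := by
    intro t ht
    rw [Set.uIcc_of_le (by norm_num : (0:ℝ) ≤ 1)] at ht
    have hcd : HasDerivAt c d t := by
      have h0 : HasDerivAt (fun t : ℝ => (t:ℂ)) 1 t := by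
        simpa using (hasDerivAt_id t).ofReal_comp
      have := (h0.mul_const d).const_add w₁
      simpa only [one_mul] using this
    have htanh : HasDerivAt Complex.tanh (1 - Complex.tanh (c t) ^ 2) (c t) :=
      hs6_hasDerivAt_tanh (hs6_cosh_ne_zero (hkey t ht))
    have hfd : HasDerivAt f (deriv f (γ t)) (γ t) :=
      (hf.differentiableAt (isOpen_ball.mem_nhds (hγmem t ht))).hasDerivAt
    have := hfd.comp t ((htanh.comp t hcd))
    refine this.congr_deriv ?_
    symm
    show (1 - (γ t) ^ 2) * deriv f (γ t) * d = deriv f (γ t) * ((1 - (γ t) ^ 2) * d)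
    ring
  -- continuity & integrability
  have hccont : Continuous c := by fun_prop
  have hγcont : ContinuousOn γ (Set.uIcc (0:ℝ) 1) := by
    rw [Set.uIcc_of_le (by norm_num : (0:ℝ) ≤ 1)]
    intro t ht
    exact ((hs6_hasDerivAt_tanh (hs6_cosh_ne_zero (hkey t ht))).continuousAt.comp
      hccont.continuousAt).continuousWithinAt
  have hγmaps : Set.MapsTo γ (Set.uIcc (0:ℝ) 1) (ball (0:ℂ) 1) := by
    rw [Set.uIcc_of_le (by norm_num : (0:ℝ) ≤ 1)]
    exact fun t ht => hγmem t ht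
  have hcont : ContinuousOn (fun t => h (γ t)) (Set.uIcc (0:ℝ) 1) :=
    hch.comp hγcont hγmaps
  have hint1 : IntervalIntegrable (fun t => h (γ t)) MeasureTheory.volume 0 1 :=
    hcont.intervalIntegrable
  have hint2 : IntervalIntegrable (fun t => h (γ t) * d) MeasureTheory.volume 0 1 :=
    (hcont.mul continuousOn_const).intervalIntegrable
  -- fundamental theorem of calculus
  have hFTC : ∫ t in (0:ℝ)..1, h (γ t) * d = f (γ 1) - f (γ 0) :=
    intervalIntegral.integral_eq_sub_of_hasDerivAt hderiv hint2
  have hγ0 : γ 0 = z₁ := by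
    have h0 : c 0 = w₁ := by simp [hc]
    show Complex.tanh (c 0) = z₁
    rw [h0, hw₁, hs6_tanh_atanh hz₁]
  have hγ1 : γ 1 = z₂ := by
    have h0 : c 1 = w₂ := by simp [hc, hd']
    show Complex.tanh (c 1) = z₂
    rw [h0, hw₂, hs6_tanh_atanh hz₂]
  have hI : (∫ t in (0:ℝ)..1, h (γ t)) * d = 0 := by
    rw [← intervalIntegral.integral_mul_const, hFTC, hγ0, hγ1, hfz, sub_self]
  have hIzero : (∫ t in (0:ℝ)..1, h (γ t)) = 0 := by
    rcases mul_eq_zero.mp hI with h0 | h0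
    · exact h0
    · exact absurd h0 hd
  -- dichotomy
  rcases hs6_pos_or_const hAh (fun z hz => hre z hz) with hpos | ⟨cc, hcc⟩
  · -- real part of the integral is positive: contradiction
    have hre0 : (∫ t in (0:ℝ)..1, h (γ t)).re = ∫ t in (0:ℝ)..1, (h (γ t)).re := by
      have := (Complex.reCLM.intervalIntegral_comp_comm hint1).symm
      simpa using this
    have hrepos : 0 < ∫ t in (0:ℝ)..1, (h (γ t)).re := by
      apply intervalIntegral.intervalIntegral_pos_of_pos_on
      · exact (Complex.continuous_re.comp_continuousOn hcont).intervalIntegrable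
      · intro t ht
        exact hpos _ (hγmem t ⟨le_of_lt ht.1, le_of_lt ht.2⟩)
      · norm_num
    rw [hIzero] at hre0
    simp only [Complex.zero_re] at hre0
    linarith
  · -- constant case
    have hcval : (∫ t in (0:ℝ)..1, h (γ t)) = cc := by
      have heq : Set.EqOn (fun t => h (γ t)) (fun _ => cc) (Set.uIcc (0:ℝ) 1) := by
        intro t ht
        rw [Set.uIcc_of_le (by norm_num : (0:ℝ) ≤ 1)] at ht
        exact hcc _ (hγmem t ht)
      rw [intervalIntegral.integral_congr heq]
      simp
    have hcc0 : cc = 0 := by rw [← hcval, hIzero]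
    -- then deriv f = 0 on the ball, so f is constant
    have hdf : ∀ z ∈ ball (0:ℂ) 1, deriv f z = 0 := by
      intro z hz
      have := hcc z hz
      rw [hcc0, hh] at this
      have hzne : (1:ℂ) - z^2 ≠ 0 := by
        intro h0
        have hz2 : z^2 = 1 := by linear_combination -h0
        simp only [mem_ball, dist_zero_right] at hz
        have : ‖z^2‖ = 1 := by rw [hz2]; simp
        rw [norm_pow] at this
        nlinarith [norm_nonneg z]
      exact (mul_eq_zero.mp this).resolve_left hzne
    apply hnc
    refine ⟨f 0, fun z hz => ?_⟩
    have hfd0 : ∀ x ∈ ball (0:ℂ) 1, fderivWithin ℂ f (ball (0:ℂ) 1) x = 0 := by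
      intro x hx
      rw [fderivWithin_of_isOpen isOpen_ball hx]
      have hdx : HasDerivAt f 0 x := by
        have := (hf.differentiableAt (isOpen_ball.mem_nhds hx)).hasDerivAt
        rwa [hdf x hx] at this
      have : HasFDerivAt f (0 : ℂ →L[ℂ] ℂ) x := by
        have h' := hdx.hasFDerivAt
        rw [ContinuousLinearMap.toSpanSingleton_zero] at h'
        exact h'
      exact this.fderiv
    exact (convex_ball (0:ℂ) 1).is_const_of_fderivWithin_eq_zero (𝕜 := ℂ) hf hfd0 hz
      (by simp [mem_ball])
end

section
/- Let h, g be holomorphic on the open unit disk E and let f = h + conj(g) be locally univalent and sense-preserving (i.e., h' ≠ 0 and |g'/h'| < 1 on E). Fix γ ∈ [0,π). Then f is an injective harmonic map of E onto a domain convex in the direction e^{iγ} if and only if the holomorphic function h - e^{2iγ}g is injective on E and maps E onto a domain convex in the direction e^{iγ}. -/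
open Complex Metric Topology Filter

/-- A set `Ω ⊆ ℂ` is convex in the direction `e^{iγ}` if its intersection with every
line parallel to the line through `0` and `e^{iγ}` is connected (possibly empty). -/
def ConvexInDirection (γ : ℝ) (Ω : Set ℂ) : Prop :=
  ∀ c : ℂ, IsPreconnected (Ω ∩ {w : ℂ | ∃ t : ℝ, w = c + (t : ℂ) * Complex.exp (Complex.I * γ)})

/-! ### Auxiliary linear algebra: real-linear maps `w ↦ p w + q w̄` -/

noncomputable def Tmap (p q : ℂ) : ℂ →L[ℝ] ℂ :=
  p • (ContinuousLinearMap.id ℝ ℂ) +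
    (q • (ContinuousLinearMap.id ℝ ℂ)).comp (Complex.conjCLE : ℂ ≃L[ℝ] ℂ).toContinuousLinearMap

lemma Tmap_apply (p q w : ℂ) : Tmap p q w = p * w + q * (starRingEnd ℂ) w := by
  simp [Tmap, smul_eq_mul]

noncomputable def realCLE (p q : ℂ) (hpq : Complex.normSq q < Complex.normSq p) : ℂ ≃L[ℝ] ℂ :=
  ContinuousLinearEquiv.equivOfInverse (Tmap p q)
    (((Complex.normSq p - Complex.normSq q)⁻¹ : ℝ) • Tmap ((starRingEnd ℂ) p) (-q))
    (fun w => by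
      have hd : ((Complex.normSq p : ℂ) - (Complex.normSq q : ℂ)) ≠ 0 := by
        rw [← Complex.ofReal_sub]
        exact_mod_cast sub_ne_zero.2 (ne_of_gt hpq)
      have hp : (starRingEnd ℂ) p * p = (Complex.normSq p : ℂ) := by
        rw [mul_comm, Complex.mul_conj]
      have hq : (starRingEnd ℂ) q * q = (Complex.normSq q : ℂ) := by
        rw [mul_comm, Complex.mul_conj]
      simp only [ContinuousLinearMap.smul_apply, Tmap_apply, map_add, map_mul,
        Complex.conj_conj, Complex.real_smul]
      push_cast
      rw [← mul_add, inv_mul_eq_iff_eq_mul₀ hd]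
      linear_combination w * hp - w * hq)
    (fun w => by
      have hd : ((Complex.normSq p : ℂ) - (Complex.normSq q : ℂ)) ≠ 0 := by
        rw [← Complex.ofReal_sub]
        exact_mod_cast sub_ne_zero.2 (ne_of_gt hpq)
      have hp : (starRingEnd ℂ) p * p = (Complex.normSq p : ℂ) := by
        rw [mul_comm, Complex.mul_conj]
      have hq : (starRingEnd ℂ) q * q = (Complex.normSq q : ℂ) := by
        rw [mul_comm, Complex.mul_conj]
      simp only [ContinuousLinearMap.smul_apply, Tmap_apply, map_add, map_mul, map_neg,
        Complex.conj_conj, Complex.real_smul, map_inv₀, Complex.ofReal_inv, map_sub,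
        Complex.conj_ofReal]
      push_cast
      field_simp
      linear_combination w * hp - w * hq)

lemma realCLE_coe (p q : ℂ) (hpq : Complex.normSq q < Complex.normSq p) :
    (realCLE p q hpq : ℂ →L[ℝ] ℂ) = Tmap p q := rfl

lemma realCLE_apply (p q : ℂ) (hpq : Complex.normSq q < Complex.normSq p) (w : ℂ) :
    realCLE p q hpq w = p * w + q * (starRingEnd ℂ) w := Tmap_apply p q w

/-! ### Elementary positivity lemmas -/

lemma pos_aux1 (q0 : ℂ) (h : Complex.normSq q0 < 1) : 0 < ((1 + q0) / (1 - q0)).re := by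
  have h1 : 1 - q0 ≠ 0 := by
    intro h0
    have : q0 = 1 := by linear_combination -h0
    rw [this] at h; simp at h
  have hpos : 0 < Complex.normSq (1 - q0) := Complex.normSq_pos.2 h1
  rw [Complex.div_re, ← add_div]
  apply div_pos
  · rw [Complex.normSq_apply] at h
    simp only [Complex.add_re, Complex.sub_re, Complex.one_re, Complex.add_im,
      Complex.sub_im, Complex.one_im]
    nlinarith
  · exact hpos

lemma pos_aux2 (a b : ℂ) (hab : a + (starRingEnd ℂ) b = 1)
    (hn : Complex.normSq b < Complex.normSq a) : 0 < (a - b).re := by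
  rw [Complex.ext_iff] at hab
  rw [Complex.normSq_apply, Complex.normSq_apply] at hn
  simp only [Complex.add_re, Complex.add_im, Complex.conj_re, Complex.conj_im,
    Complex.one_re, Complex.one_im, Complex.sub_re] at hab ⊢
  have h1 : a.im = b.im := by linarith [hab.2]
  have h2 : (0:ℝ) ≤ (b.re - a.re) * (b.re + a.re) ∨ a.re - b.re > 0 := by
    by_cases hc : 0 < a.re - b.re
    · exact Or.inr hc
    · exact Or.inl (mul_nonneg (by linarith) (by linarith [hab.1]))
  rcases h2 with h2 | h2
  · have h3 : a.im * a.im = b.im * b.im := by rw [h1]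
    nlinarith [hab.1, h3, h2, hn]
  · exact h2

lemma pos_aux3 (a b : ℂ) (hab : a - b = 1)
    (hn : Complex.normSq b < Complex.normSq a) : 0 < (a + b).re := by
  rw [Complex.ext_iff] at hab
  rw [Complex.normSq_apply, Complex.normSq_apply] at hn
  simp only [Complex.sub_re, Complex.sub_im, Complex.one_re, Complex.one_im,
    Complex.add_re] at hab ⊢
  have h1 : a.im = b.im := by linarith [hab.2]
  have h3 : a.im * a.im = b.im * b.im := by rw [h1]
  nlinarith [hab.1, h3, hn]

/-- membership in the line through `c` with direction `Λ`, for unit `Λ`. -/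
lemma line_mem (Λ c w : ℂ) (hΛ : Λ * (starRingEnd ℂ) Λ = 1) :
    (∃ t : ℝ, w = c + (t : ℝ) * Λ) ↔
      ((starRingEnd ℂ) Λ * w).im = ((starRingEnd ℂ) Λ * c).im := by
  constructor
  · rintro ⟨t, rfl⟩
    have : (starRingEnd ℂ) Λ * (c + t * Λ) = (starRingEnd ℂ) Λ * c + (t : ℂ) := by
      linear_combination (t : ℂ) * hΛ
    rw [this]
    simp
  · intro him
    refine ⟨((starRingEnd ℂ) Λ * w).re - ((starRingEnd ℂ) Λ * c).re, ?_⟩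
    have key : (starRingEnd ℂ) Λ * (w - c) =
        ((((starRingEnd ℂ) Λ * w).re - ((starRingEnd ℂ) Λ * c).re : ℝ) : ℂ) := by
      apply Complex.ext
      · simp [mul_sub]
      · simp [mul_sub, him]
    linear_combination Λ * key - (w - c) * hΛ

/-! ### Strict differentials -/

lemma harm_hasStrictFDerivAt {φ ψ : ℂ → ℂ} {p q : ℂ} {z : ℂ}
    (hφ : HasStrictDerivAt φ p z) (hψ : HasStrictDerivAt ψ q z) :
    HasStrictFDerivAt (fun w => φ w + (starRingEnd ℂ) (ψ w))
      (Tmap p ((starRingEnd ℂ) q)) z := by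
  have h1 : HasStrictFDerivAt φ
      ((ContinuousLinearMap.smulRight (1 : ℂ →L[ℂ] ℂ) p).restrictScalars ℝ) z :=
    HasStrictFDerivAt.restrictScalars ℝ hφ
  have h2 : HasStrictFDerivAt (fun w => (starRingEnd ℂ) (ψ w))
      ((Complex.conjCLE : ℂ ≃L[ℝ] ℂ).toContinuousLinearMap.comp
        ((ContinuousLinearMap.smulRight (1 : ℂ →L[ℂ] ℂ) q).restrictScalars ℝ)) z :=
    ((Complex.conjCLE : ℂ ≃L[ℝ] ℂ).toContinuousLinearMap.hasStrictFDerivAt).comp z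
      (HasStrictFDerivAt.restrictScalars ℝ hψ)
  have h3 := h1.add h2
  have heq : ((ContinuousLinearMap.smulRight (1 : ℂ →L[ℂ] ℂ) p).restrictScalars ℝ) +
      ((Complex.conjCLE : ℂ ≃L[ℝ] ℂ).toContinuousLinearMap.comp
        ((ContinuousLinearMap.smulRight (1 : ℂ →L[ℂ] ℂ) q).restrictScalars ℝ))
      = Tmap p ((starRingEnd ℂ) q) := by
    apply ContinuousLinearMap.ext
    intro w
    simp [Tmap_apply, smul_eq_mul, mul_comm, map_mul]
  rw [heq] at h3
  exact h3

lemma holo_hasStrictFDerivAt {φ : ℂ → ℂ} {p : ℂ} {z : ℂ}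
    (hφ : HasStrictDerivAt φ p z) :
    HasStrictFDerivAt φ (Tmap p 0) z := by
  have h1 : HasStrictFDerivAt φ
      ((ContinuousLinearMap.smulRight (1 : ℂ →L[ℂ] ℂ) p).restrictScalars ℝ) z :=
    HasStrictFDerivAt.restrictScalars ℝ hφ
  have heq : ((ContinuousLinearMap.smulRight (1 : ℂ →L[ℂ] ℂ) p).restrictScalars ℝ)
      = Tmap p 0 := by
    apply ContinuousLinearMap.ext
    intro w
    simp [Tmap_apply, smul_eq_mul, mul_comm]
  rw [heq] at h1
  exact h1

lemma analytic_strict {φ : ℂ → ℂ} {s : Set ℂ} (hs : IsOpen s) (hφ : DifferentiableOn ℂ φ s)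
    {z : ℂ} (hz : z ∈ s) : HasStrictDerivAt φ (deriv φ z) z := by
  have ha : AnalyticAt ℂ φ z := hφ.analyticAt (hs.mem_nhds hz)
  have h1 := ha.hasStrictFDerivAt.hasStrictDerivAt
  rwa [fderiv_apply_one_eq_deriv] at h1

/-! ### The master transfer lemma -/

lemma master (γ : ℝ) (U : Set ℂ) (hU : IsOpen U) (u v : ℂ → ℂ)
    (A : ℂ → (ℂ ≃L[ℝ] ℂ)) (B : ℂ → (ℂ →L[ℝ] ℂ))
    (hA : ∀ z ∈ U, HasStrictFDerivAt u (A z : ℂ →L[ℝ] ℂ) z)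
    (hB : ∀ z ∈ U, HasFDerivAt v (B z) z)
    (hline : ∀ z ∈ U, ((starRingEnd ℂ) (Complex.exp (Complex.I * γ)) * v z).im =
      ((starRingEnd ℂ) (Complex.exp (Complex.I * γ)) * u z).im)
    (hpos : ∀ z ∈ U, ∀ w : ℂ, A z w = Complex.exp (Complex.I * γ) →
      0 < ((starRingEnd ℂ) (Complex.exp (Complex.I * γ)) * B z w).re)
    (hinj : Set.InjOn u U) (hconv : ConvexInDirection γ (u '' U)) :
    Set.InjOn v U ∧ ConvexInDirection γ (v '' U) := by
  classical
  set Λ : ℂ := Complex.exp (Complex.I * γ) with hΛdef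
  have habs : ‖Λ‖ = 1 := by
    rw [hΛdef, Complex.norm_exp]; simp
  have hΛ : Λ * (starRingEnd ℂ) Λ = 1 := by
    rw [Complex.mul_conj]
    rw [Complex.normSq_eq_norm_sq, habs]; norm_num
  -- openness of the image of u
  have hΩ : IsOpen (u '' U) := by
    rw [isOpen_iff_mem_nhds]
    rintro w ⟨z, hz, rfl⟩
    have hP : HasStrictFDerivAt u (A z : ℂ →L[ℝ] ℂ) z := hA z hz
    have hsrc : z ∈ (hP.toOpenPartialHomeomorph u).source := hP.mem_toOpenPartialHomeomorph_source
    have hco : ⇑(hP.toOpenPartialHomeomorph u) = u := hP.toOpenPartialHomeomorph_coe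
    have hopen : IsOpen (u '' ((hP.toOpenPartialHomeomorph u).source ∩ U)) := by
      have himeq : u '' ((hP.toOpenPartialHomeomorph u).source ∩ U)
          = (hP.toOpenPartialHomeomorph u) '' ((hP.toOpenPartialHomeomorph u).source ∩ U) := by
        rw [hco]
      rw [himeq]
      exact (hP.toOpenPartialHomeomorph u).isOpen_image_of_subset_source
        ((hP.toOpenPartialHomeomorph u).open_source.inter hU) Set.inter_subset_left
    refine Filter.mem_of_superset (hopen.mem_nhds ⟨z, ⟨hsrc, hz⟩, rfl⟩) ?_
    exact Set.image_mono (f := u) Set.inter_subset_right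
  -- the parameter set of the line through c, and the section ζ
  set T : ℂ → Set ℝ := fun c => {t : ℝ | c + (t : ℂ) * Λ ∈ u '' U} with hTdef
  have hTopen : ∀ c, IsOpen (T c) := by
    intro c
    exact hΩ.preimage (continuous_const.add (Complex.continuous_ofReal.mul continuous_const))
  set ζ : ℂ → ℝ → ℂ := fun c t =>
    if hw : ∃ x, x ∈ U ∧ u x = c + (t : ℂ) * Λ then hw.choose else 0 with hζdef
  have hζ : ∀ c, ∀ t ∈ T c, ζ c t ∈ U ∧ u (ζ c t) = c + (t : ℂ) * Λ := by
    intro c t ht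
    have hex : ∃ x, x ∈ U ∧ u x = c + (t : ℂ) * Λ := by
      rcases ht with ⟨x, hx, hux⟩; exact ⟨x, hx, hux⟩
    simp only [hζdef, dif_pos hex]
    exact hex.choose_spec
  have huniq : ∀ c, ∀ t ∈ T c, ∀ z ∈ U, u z = c + (t : ℂ) * Λ → z = ζ c t := by
    intro c t ht z hz hu
    exact hinj hz (hζ c t ht).1 (by rw [hu, (hζ c t ht).2])
  -- differentiability of ζ
  have hζd : ∀ c, ∀ t ∈ T c, HasDerivAt (ζ c) ((A (ζ c t)).symm Λ) t := by
    intro c t ht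
    obtain ⟨hzU, hzu⟩ := hζ c t ht
    set z : ℂ := ζ c t with hzdef
    have hstrict : HasStrictFDerivAt u (A z : ℂ →L[ℝ] ℂ) z := hA z hzU
    set inv : ℂ → ℂ := hstrict.localInverse u (A z) z with hinvdef
    have hinvz : inv (u z) = z := hstrict.localInverse_apply_image
    have hLc : Continuous (fun s : ℝ => c + (s : ℂ) * Λ) :=
      continuous_const.add (Complex.continuous_ofReal.mul continuous_const)
    have hLt : Filter.Tendsto (fun s : ℝ => c + (s : ℂ) * Λ) (𝓝 t) (𝓝 (u z)) := by
      rw [hzu]; exact hLc.tendsto t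
    have h1 : ∀ᶠ s : ℝ in 𝓝 t, u (inv (c + (s : ℂ) * Λ)) = c + (s : ℂ) * Λ :=
      hLt.eventually hstrict.eventually_right_inverse
    have h2 : ∀ᶠ s : ℝ in 𝓝 t, inv (c + (s : ℂ) * Λ) ∈ U := by
      have hev : ∀ᶠ y in 𝓝 (u z), inv y ∈ U :=
        hstrict.localInverse_continuousAt.eventually_mem
          (show U ∈ 𝓝 (inv (u z)) by rw [hinvz]; exact hU.mem_nhds hzU)
      exact hLt.eventually hev
    have h3 : ∀ᶠ s in 𝓝 t, s ∈ T c := (hTopen c).eventually_mem ht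
    have heq : (fun s => ζ c s) =ᶠ[𝓝 t] (fun s => inv (c + (s : ℂ) * Λ)) := by
      filter_upwards [h1, h2, h3] with s hs1 hs2 hs3
      exact (huniq c s hs3 _ hs2 hs1).symm
    have hd1 : HasDerivAt (fun s : ℝ => c + (s : ℂ) * Λ) Λ t := by
      have hre : HasDerivAt (fun s : ℝ => (s : ℂ)) 1 t := by
        simpa using (hasDerivAt_id t).ofReal_comp
      simpa using (hre.mul_const Λ).const_add c
    have hd2 : HasFDerivAt inv ((A z).symm : ℂ →L[ℝ] ℂ) (u z) :=
      hstrict.to_localInverse.hasFDerivAt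
    rw [hzu] at hd2
    exact (hd2.comp_hasDerivAt t hd1).congr_of_eventuallyEq heq
  -- T c is convex and preconnected
  have hTc : ∀ c, Convex ℝ (T c) ∧ IsPreconnected (T c) := by
    intro c
    have hσ : ∀ s : ℝ, ((starRingEnd ℂ) Λ * (c + (s : ℂ) * Λ)).re
        - ((starRingEnd ℂ) Λ * c).re = s := by
      intro s
      have : (starRingEnd ℂ) Λ * (c + (s : ℂ) * Λ) = (starRingEnd ℂ) Λ * c + (s : ℂ) := by
        linear_combination (s : ℂ) * hΛ
      rw [this]; simp
    have hset : T c = (fun w => ((starRingEnd ℂ) Λ * w).re - ((starRingEnd ℂ) Λ * c).re) ''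
        (u '' U ∩ {w : ℂ | ∃ t : ℝ, w = c + (t : ℂ) * Λ}) := by
      ext t
      constructor
      · intro ht
        exact ⟨c + (t : ℂ) * Λ, ⟨ht, ⟨t, rfl⟩⟩, hσ t⟩
      · rintro ⟨w, ⟨hwU, ⟨s, rfl⟩⟩, hts⟩
        simp only [hσ s] at hts
        rw [hts] at hwU
        exact hwU
    have hpre : IsPreconnected (T c) := by
      rw [hset]
      have hcont : Continuous (fun w : ℂ =>
          ((starRingEnd ℂ) Λ * w).re - ((starRingEnd ℂ) Λ * c).re) :=
        ((Complex.continuous_re.comp (continuous_const.mul continuous_id)).sub continuous_const)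
      have := hconv c
      rw [← hΛdef] at this
      exact this.image _ hcont.continuousOn
    exact ⟨(isPreconnected_iff_ordConnected.1 hpre).convex, hpre⟩
  -- the key monotone function along the line
  have hφ : ∀ c, ∀ t ∈ T c, HasDerivAt (fun s => ((starRingEnd ℂ) Λ * v (ζ c s)).re)
      (((starRingEnd ℂ) Λ * (B (ζ c t) ((A (ζ c t)).symm Λ))).re) t := by
    intro c t ht
    have h1 : HasDerivAt (fun s => v (ζ c s)) (B (ζ c t) ((A (ζ c t)).symm Λ)) t :=
      (hB _ (hζ c t ht).1).comp_hasDerivAt t (hζd c t ht)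
    have h2 := h1.const_mul ((starRingEnd ℂ) Λ)
    exact (Complex.reCLM.hasFDerivAt
      (x := (starRingEnd ℂ) Λ * v (ζ c t))).comp_hasDerivAt t h2
  have hmono : ∀ c, StrictMonoOn (fun s => ((starRingEnd ℂ) Λ * v (ζ c s)).re) (T c) := by
    intro c
    apply strictMonoOn_of_deriv_pos (hTc c).1
    · intro t ht
      exact (hφ c t ht).continuousAt.continuousWithinAt
    · intro t ht
      rw [(hTopen c).interior_eq] at ht
      rw [(hφ c t ht).deriv]
      exact hpos _ (hζ c t ht).1 _ (ContinuousLinearEquiv.apply_symm_apply _ _)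
  constructor
  · -- injectivity of v
    intro z1 h1 z2 h2 hv12
    have him : ((starRingEnd ℂ) Λ * u z2).im = ((starRingEnd ℂ) Λ * u z1).im := by
      rw [← hline z1 h1, ← hline z2 h2, hv12]
    obtain ⟨t2, ht2eq⟩ := (line_mem Λ (u z1) (u z2) hΛ).2 him
    have h0 : (0 : ℝ) ∈ T (u z1) := by
      show u z1 + ((0 : ℝ) : ℂ) * Λ ∈ u '' U
      simpa using ⟨z1, h1, rfl⟩
    have ht2 : t2 ∈ T (u z1) := by
      show u z1 + (t2 : ℂ) * Λ ∈ u '' U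
      rw [← ht2eq]
      exact ⟨z2, h2, rfl⟩
    have e1 : z1 = ζ (u z1) 0 := huniq _ 0 h0 z1 h1 (by simp)
    have e2 : z2 = ζ (u z1) t2 := huniq _ t2 ht2 z2 h2 ht2eq
    have hval : ((starRingEnd ℂ) Λ * v (ζ (u z1) 0)).re
        = ((starRingEnd ℂ) Λ * v (ζ (u z1) t2)).re := by
      rw [← e1, ← e2, hv12]
    have := (hmono (u z1)).injOn h0 ht2 hval
    rw [e1, e2, this]
  · -- convexity of the image of v
    intro c
    rw [← hΛdef]
    have hseteq : v '' U ∩ {w : ℂ | ∃ t : ℝ, w = c + (t : ℂ) * Λ}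
        = (fun t => v (ζ c t)) '' (T c) := by
      ext w
      constructor
      · rintro ⟨⟨z, hz, rfl⟩, hwl⟩
        have him : ((starRingEnd ℂ) Λ * u z).im = ((starRingEnd ℂ) Λ * c).im := by
          rw [← hline z hz]
          exact (line_mem Λ c (v z) hΛ).1 hwl
        obtain ⟨t, hteq⟩ := (line_mem Λ c (u z) hΛ).2 him
        have ht : t ∈ T c := by
          show c + (t : ℂ) * Λ ∈ u '' U
          rw [← hteq]; exact ⟨z, hz, rfl⟩
        refine ⟨t, ht, ?_⟩
        show v (ζ c t) = v z
        rw [← huniq c t ht z hz hteq]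
      · rintro ⟨t, ht, rfl⟩
        obtain ⟨hzU, hzu⟩ := hζ c t ht
        refine ⟨⟨ζ c t, hzU, rfl⟩, ?_⟩
        rw [Set.mem_setOf_eq, line_mem Λ c _ hΛ, hline _ hzU, hzu,
          ← line_mem Λ c _ hΛ]
        exact ⟨t, rfl⟩
    rw [hseteq]
    apply (hTc c).2.image
    intro t ht
    exact (((hB _ (hζ c t ht).1).continuousAt.comp
      (hζd c t ht).continuousAt).continuousWithinAt)

theorem stmt_8 (h g : ℂ → ℂ)
    (hh : DifferentiableOn ℂ h (ball (0 : ℂ) 1))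
    (hg : DifferentiableOn ℂ g (ball (0 : ℂ) 1))
    (hlu : ∀ z ∈ ball (0 : ℂ) 1, deriv h z ≠ 0 ∧ ‖deriv g z / deriv h z‖ < 1)
    (γ : ℝ) (hγ : γ ∈ Set.Ico 0 Real.pi) :
    (Set.InjOn (fun z => h z + (starRingEnd ℂ) (g z)) (ball (0 : ℂ) 1) ∧
      ConvexInDirection γ ((fun z => h z + (starRingEnd ℂ) (g z)) '' ball (0 : ℂ) 1)) ↔
    (Set.InjOn (fun z => h z - Complex.exp (2 * Complex.I * γ) * g z) (ball (0 : ℂ) 1) ∧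
      ConvexInDirection γ
        ((fun z => h z - Complex.exp (2 * Complex.I * γ) * g z) '' ball (0 : ℂ) 1)) := by
  classical
  set U : Set ℂ := ball (0 : ℂ) 1 with hUdef
  have hUopen : IsOpen U := isOpen_ball
  set Λ : ℂ := Complex.exp (Complex.I * γ) with hΛdef
  have habs : ‖Λ‖ = 1 := by rw [hΛdef, Complex.norm_exp]; simp
  have hΛ : Λ * (starRingEnd ℂ) Λ = 1 := by
    rw [Complex.mul_conj, Complex.normSq_eq_norm_sq, habs]; norm_num
  have hΛ0 : Λ ≠ 0 := Complex.exp_ne_zero _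
  have hE2 : Complex.exp (2 * Complex.I * γ) = Λ * Λ := by
    rw [hΛdef, ← Complex.exp_add]; ring_nf
  have hh' : ∀ z ∈ U, HasStrictDerivAt h (deriv h z) z :=
    fun z hz => analytic_strict hUopen hh hz
  have hg' : ∀ z ∈ U, HasStrictDerivAt g (deriv g z) z :=
    fun z hz => analytic_strict hUopen hg hz
  have hlt : ∀ z ∈ U, Complex.normSq (deriv g z) < Complex.normSq (deriv h z) := by
    intro z hz
    obtain ⟨hp0, hq⟩ := hlu z hz
    rw [norm_div, div_lt_one (norm_pos_iff.2 hp0)] at hq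
    rw [Complex.normSq_eq_norm_sq, Complex.normSq_eq_norm_sq]
    exact pow_lt_pow_left₀ hq (norm_nonneg _) (by norm_num)
  have hD0 : ∀ z ∈ U, deriv h z - Complex.exp (2 * Complex.I * γ) * deriv g z ≠ 0 := by
    intro z hz h0
    have he : deriv h z = Complex.exp (2 * Complex.I * γ) * deriv g z := by
      linear_combination h0
    have h2 := hlt z hz
    rw [he, Complex.normSq_mul] at h2
    have habs2 : Complex.normSq (Complex.exp (2 * Complex.I * γ)) = 1 := by
      rw [hE2, Complex.normSq_mul, Complex.normSq_eq_norm_sq, habs]; norm_num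
    rw [habs2, one_mul] at h2
    exact lt_irrefl _ h2
  have hltF : ∀ z ∈ U, Complex.normSq (0 : ℂ)
      < Complex.normSq (deriv h z - Complex.exp (2 * Complex.I * γ) * deriv g z) := by
    intro z hz
    rw [map_zero]
    exact Complex.normSq_pos.2 (hD0 z hz)
  have hltf : ∀ z ∈ U, Complex.normSq ((starRingEnd ℂ) (deriv g z))
      < Complex.normSq (deriv h z) := by
    intro z hz
    rw [Complex.normSq_conj]
    exact hlt z hz
  -- the derivative families
  set Af : ℂ → (ℂ ≃L[ℝ] ℂ) := fun z =>
    if hz : z ∈ U then realCLE (deriv h z) ((starRingEnd ℂ) (deriv g z)) (hltf z hz)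
    else ContinuousLinearEquiv.refl ℝ ℂ with hAfdef
  set AF : ℂ → (ℂ ≃L[ℝ] ℂ) := fun z =>
    if hz : z ∈ U then
      realCLE (deriv h z - Complex.exp (2 * Complex.I * γ) * deriv g z) 0 (hltF z hz)
    else ContinuousLinearEquiv.refl ℝ ℂ with hAFdef
  set Bf : ℂ → (ℂ →L[ℝ] ℂ) := fun z =>
    Tmap (deriv h z) ((starRingEnd ℂ) (deriv g z)) with hBfdef
  set BF : ℂ → (ℂ →L[ℝ] ℂ) := fun z =>
    Tmap (deriv h z - Complex.exp (2 * Complex.I * γ) * deriv g z) 0 with hBFdef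
  have hAf : ∀ z ∈ U, HasStrictFDerivAt (fun z => h z + (starRingEnd ℂ) (g z))
      ((Af z : ℂ →L[ℝ] ℂ)) z := by
    intro z hz
    have hcoe : (Af z : ℂ →L[ℝ] ℂ)
        = Tmap (deriv h z) ((starRingEnd ℂ) (deriv g z)) := by
      rw [hAfdef]; simp only; rw [dif_pos hz]; rfl
    rw [hcoe]
    exact harm_hasStrictFDerivAt (hh' z hz) (hg' z hz)
  have hAF : ∀ z ∈ U, HasStrictFDerivAt
      (fun z => h z - Complex.exp (2 * Complex.I * γ) * g z) ((AF z : ℂ →L[ℝ] ℂ)) z := by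
    intro z hz
    have hcoe : (AF z : ℂ →L[ℝ] ℂ)
        = Tmap (deriv h z - Complex.exp (2 * Complex.I * γ) * deriv g z) 0 := by
      rw [hAFdef]; simp only; rw [dif_pos hz]; rfl
    rw [hcoe]
    exact holo_hasStrictFDerivAt ((hh' z hz).sub ((hg' z hz).const_mul _))
  have hBf : ∀ z ∈ U, HasFDerivAt (fun z => h z + (starRingEnd ℂ) (g z)) (Bf z) z := by
    intro z hz
    exact (harm_hasStrictFDerivAt (hh' z hz) (hg' z hz)).hasFDerivAt
  have hBF : ∀ z ∈ U, HasFDerivAt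
      (fun z => h z - Complex.exp (2 * Complex.I * γ) * g z) (BF z) z := by
    intro z hz
    exact (holo_hasStrictFDerivAt ((hh' z hz).sub ((hg' z hz).const_mul _))).hasFDerivAt
  -- the two functions have the same "height" in the direction Λ
  have hlineFf : ∀ z ∈ U,
      ((starRingEnd ℂ) Λ * (h z - Complex.exp (2 * Complex.I * γ) * g z)).im
      = ((starRingEnd ℂ) Λ * (h z + (starRingEnd ℂ) (g z))).im := by
    intro z hz
    have hm : (starRingEnd ℂ) (Λ * g z) = (starRingEnd ℂ) Λ * (starRingEnd ℂ) (g z) :=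
      map_mul _ _ _
    have key : (starRingEnd ℂ) Λ * (h z + (starRingEnd ℂ) (g z))
        = (starRingEnd ℂ) Λ * (h z - Complex.exp (2 * Complex.I * γ) * g z)
          + (Λ * g z + (starRingEnd ℂ) (Λ * g z)) := by
      rw [hE2]
      linear_combination -hm + (Λ * g z) * hΛ
    rw [key, Complex.add_im, Complex.add_conj]
    simp
  -- positivity, direction 1 : u = f, v = F
  have hpos1 : ∀ z ∈ U, ∀ w : ℂ, Af z w = Λ →
      0 < ((starRingEnd ℂ) Λ * (BF z) w).re := by
    intro z hz w hw
    rw [hAfdef] at hw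
    simp only at hw
    rw [dif_pos hz, realCLE_apply] at hw
    have hw0 : w ≠ 0 := by
      rintro rfl
      simp at hw
      exact hΛ0 hw.symm
    set a : ℂ := (starRingEnd ℂ) Λ * (deriv h z * w) with hadef
    set b : ℂ := Λ * (deriv g z * w) with hbdef
    have hcb : (starRingEnd ℂ) b
        = (starRingEnd ℂ) Λ * ((starRingEnd ℂ) (deriv g z) * (starRingEnd ℂ) w) := by
      rw [hbdef, map_mul, map_mul]
    have hab : a + (starRingEnd ℂ) b = 1 := by
      rw [hadef, hcb]
      linear_combination (starRingEnd ℂ) Λ * hw + hΛ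
    have hval : (starRingEnd ℂ) Λ * (BF z w) = a - b := by
      rw [hBFdef]
      simp only [Tmap_apply]
      rw [hE2, hadef, hbdef]
      linear_combination (-(Λ * deriv g z * w)) * hΛ
    rw [hval]
    apply pos_aux2 a b hab
    rw [hadef, hbdef, Complex.normSq_mul, Complex.normSq_mul, Complex.normSq_mul,
      Complex.normSq_mul, Complex.normSq_conj]
    have h1 : Complex.normSq Λ = 1 := by rw [Complex.normSq_eq_norm_sq, habs]; norm_num
    rw [h1, one_mul, one_mul]
    have := hlt z hz
    have hw2 : 0 < Complex.normSq w := Complex.normSq_pos.2 hw0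
    nlinarith
  -- positivity, direction 2 : u = F, v = f
  have hpos2 : ∀ z ∈ U, ∀ w : ℂ, AF z w = Λ →
      0 < ((starRingEnd ℂ) Λ * (Bf z) w).re := by
    intro z hz w hw
    rw [hAFdef] at hw
    simp only at hw
    rw [dif_pos hz, realCLE_apply] at hw
    have hw0 : w ≠ 0 := by
      rintro rfl
      simp at hw
      exact hΛ0 hw.symm
    set a : ℂ := (starRingEnd ℂ) Λ * (deriv h z * w) with hadef
    set b : ℂ := Λ * (deriv g z * w) with hbdef
    have hcb : (starRingEnd ℂ) b
        = (starRingEnd ℂ) Λ * ((starRingEnd ℂ) (deriv g z) * (starRingEnd ℂ) w) := by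
      rw [hbdef, map_mul, map_mul]
    have hab : a - b = 1 := by
      rw [hE2] at hw
      rw [hadef, hbdef]
      linear_combination (starRingEnd ℂ) Λ * hw + (Λ * deriv g z * w) * hΛ + hΛ
    have hval : (starRingEnd ℂ) Λ * (Bf z w) = a + (starRingEnd ℂ) b := by
      rw [hBfdef]
      simp only [Tmap_apply]
      rw [hadef, hcb]
      ring
    rw [hval]
    have hre : (a + (starRingEnd ℂ) b).re = (a + b).re := by
      rw [Complex.add_re, Complex.add_re, Complex.conj_re]
    rw [hre]
    apply pos_aux3 a b hab
    rw [hadef, hbdef, Complex.normSq_mul, Complex.normSq_mul, Complex.normSq_mul,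
      Complex.normSq_mul, Complex.normSq_conj]
    have h1 : Complex.normSq Λ = 1 := by rw [Complex.normSq_eq_norm_sq, habs]; norm_num
    rw [h1, one_mul, one_mul]
    have := hlt z hz
    have hw2 : 0 < Complex.normSq w := Complex.normSq_pos.2 hw0
    nlinarith
  constructor
  · rintro ⟨hfin, hfcon⟩
    exact master γ U hUopen _ _ Af BF hAf hBF hlineFf hpos1 hfin hfcon
  · rintro ⟨hFin, hFcon⟩
    refine master γ U hUopen _ _ AF Bf hAF hBf (fun z hz => (hlineFf z hz).symm)
      hpos2 hFin hFcon
end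

section
/- For α ∈ [-1,1], let F_α(z) = z(1-αz)/(1-z²). Then zF_α'(z) = (z/(1-z²))·P₁(z) where P₁(z) = (1+z²-2αz)/(1-z²) has real Taylor coefficients, P₁(0) = 1, and Re P₁(z) > 0 on the open unit disk; hence zF_α' is typically real. -/
open Complex

-- aux: nonvanishing of denominator
lemma aux_ne (z : ℂ) (hz : ‖z‖ < 1) : (1 : ℂ) - z ^ 2 ≠ 0 := by
  intro h
  have hz2 : z ^ 2 = 1 := by linear_combination -h
  have : ‖z ^ 2‖ = 1 := by rw [hz2]; simp
  rw [norm_pow] at this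
  nlinarith [norm_nonneg z]

lemma aux_deriv (α : ℝ) (z : ℂ) (hz : ‖z‖ < 1) :
    deriv (fun w : ℂ => w * (1 - (α : ℂ) * w) / (1 - w ^ 2)) z =
      (1 + z ^ 2 - 2 * (α : ℂ) * z) / (1 - z ^ 2) ^ 2 := by
  have hd : (1 : ℂ) - z ^ 2 ≠ 0 := aux_ne z hz
  have h1 : HasDerivAt (fun w : ℂ => w * (1 - (α : ℂ) * w))
      (1 * (1 - (α : ℂ) * z) + z * (0 - (0 * z + (α : ℂ) * 1))) z :=
    (hasDerivAt_id z).mul ((hasDerivAt_const z (1:ℂ)).sub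
      ((hasDerivAt_const z ((α:ℂ))).mul (hasDerivAt_id z)))
  have h2 : HasDerivAt (fun w : ℂ => (1 : ℂ) - w ^ 2) (0 - (2 : ℕ) * z ^ (2 - 1)) z :=
    (hasDerivAt_const z (1:ℂ)).sub (hasDerivAt_pow 2 z)
  have := (h1.div h2 hd).deriv
  rw [show (fun w : ℂ => w * (1 - (α : ℂ) * w) / (1 - w ^ 2)) = (fun w : ℂ => w * (1 - (α : ℂ) * w)) / (fun w : ℂ => 1 - w ^ 2) from rfl, this]
  field_simp
  ring

lemma aux_sq_lt (z : ℂ) (hz : ‖z‖ < 1) : z.re ^ 2 + z.im ^ 2 < 1 := by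
  have h1 : ‖z‖ < 1 := hz
  have h2 := Complex.sq_norm z
  have h3 := Complex.normSq_apply z
  nlinarith [norm_nonneg z]

lemma aux_repos (α : ℝ) (hα1 : -1 ≤ α) (hα2 : α ≤ 1) (z : ℂ) (hz : ‖z‖ < 1) :
    0 < ((1 + z ^ 2 - 2 * (α : ℂ) * z) / (1 - z ^ 2)).re := by
  have hd : (0:ℝ) < Complex.normSq (1 - z ^ 2) :=
    Complex.normSq_pos.mpr (aux_ne z hz)
  have h := aux_sq_lt z hz
  rw [Complex.div_re, ← add_div]
  apply div_pos _ hd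
  simp only [Complex.add_re, Complex.sub_re, Complex.mul_re, Complex.mul_im,
    Complex.add_im, Complex.sub_im, Complex.one_re, Complex.one_im,
    Complex.ofReal_re, Complex.ofReal_im, pow_two, Complex.re_ofNat, Complex.im_ofNat]
  set x := z.re; set y := z.im
  have f1 : 0 < 1 - (x ^ 2 + y ^ 2) := by linarith
  have hax : α * x < 1 := by
    nlinarith [sq_nonneg (α * x - 1),
      mul_nonneg (mul_nonneg (sub_nonneg.mpr hα2) (by linarith : (0:ℝ) ≤ 1 + α)) (sq_nonneg x)]
  have f2 : 0 < 1 + (x ^ 2 + y ^ 2) - 2 * α * x := by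
    nlinarith [mul_pos (sub_pos.2 hax) (sub_pos.2 hax), sq_nonneg y,
      mul_nonneg (mul_nonneg (sub_nonneg.mpr hα2) (by linarith : (0:ℝ) ≤ 1 + α)) (sq_nonneg x)]
  nlinarith [mul_pos f1 f2]

lemma aux_im (α : ℝ) (hα1 : -1 ≤ α) (hα2 : α ≤ 1) (z : ℂ) (hz : ‖z‖ < 1) :
    ((z * (1 + z ^ 2 - 2 * (α : ℂ) * z) / (1 - z ^ 2) ^ 2).im = 0 ↔ z.im = 0) := by
  have hd : Complex.normSq ((1 - z ^ 2) ^ 2) ≠ 0 := by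
    simpa using pow_ne_zero 2 (aux_ne z hz)
  have h := aux_sq_lt z hz
  set x := z.re with hxdef; set y := z.im with hydef
  set N : ℂ := z * (1 + z ^ 2 - 2 * (α : ℂ) * z) with hN
  set D : ℂ := (1 - z ^ 2) ^ 2 with hD
  have hs : (0:ℝ) < 1 + (x ^ 2 + y ^ 2) := by positivity
  have hx1 : x < 1 := by nlinarith [sq_nonneg y, sq_nonneg (x - 1)]
  have hx1' : -1 < x := by nlinarith [sq_nonneg y, sq_nonneg (x + 1)]
  have hA : (0:ℝ) < 1 + (x ^ 2 + y ^ 2) - 2 * x := by nlinarith [sq_nonneg y]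
  have hB : (0:ℝ) < 1 + (x ^ 2 + y ^ 2) + 2 * x := by nlinarith [sq_nonneg y]
  have hC : (0:ℝ) < (1 - (x ^ 2 + y ^ 2)) *
      ((1 + (x ^ 2 + y ^ 2)) ^ 2 + 4 * x ^ 2 - 4 * α * x * (1 + (x ^ 2 + y ^ 2))) := by
    have f1 : (0:ℝ) < 1 - (x ^ 2 + y ^ 2) := by linarith
    have f2 : (0:ℝ) < (1 + (x ^ 2 + y ^ 2)) ^ 2 + 4 * x ^ 2
        - 4 * α * x * (1 + (x ^ 2 + y ^ 2)) := by
      rcases le_total 0 x with hx | hx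
      · nlinarith [mul_pos hA hA, mul_nonneg (mul_nonneg hx hs.le) (sub_nonneg.2 hα2)]
      · nlinarith [mul_pos hB hB,
          mul_nonneg (mul_nonneg (neg_nonneg.2 hx) hs.le) (by linarith : (0:ℝ) ≤ 1 + α)]
    exact mul_pos f1 f2
  have key : N.im * D.re - N.re * D.im = y * ((1 - (x ^ 2 + y ^ 2)) *
      ((1 + (x ^ 2 + y ^ 2)) ^ 2 + 4 * x ^ 2 - 4 * α * x * (1 + (x ^ 2 + y ^ 2)))) := by
    simp only [hN, hD, pow_two, Complex.mul_re, Complex.mul_im, Complex.add_re,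
      Complex.add_im, Complex.sub_re, Complex.sub_im, Complex.one_re, Complex.one_im,
      Complex.ofReal_re, Complex.ofReal_im, Complex.re_ofNat, Complex.im_ofNat,
      ← hxdef, ← hydef]
    ring
  rw [Complex.div_im, div_sub_div_same, div_eq_zero_iff]
  constructor
  · rintro (h0 | h0)
    · rw [key] at h0
      rcases mul_eq_zero.mp h0 with h1 | h1
      · exact h1
      · exact absurd h1 (ne_of_gt hC)
    · exact absurd h0 hd
  · intro hy
    left
    rw [key, hy, zero_mul]

theorem stmt_18 (α : ℝ) (hα : α ∈ Set.Icc (-1 : ℝ) 1) :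
    (∀ z : ℂ, ‖z‖ < 1 →
      z * deriv (fun w : ℂ => w * (1 - (α : ℂ) * w) / (1 - w ^ 2)) z =
        z / (1 - z ^ 2) * ((1 + z ^ 2 - 2 * (α : ℂ) * z) / (1 - z ^ 2))) ∧
    ((1 + (0 : ℂ) ^ 2 - 2 * (α : ℂ) * 0) / (1 - (0 : ℂ) ^ 2) = 1) ∧
    (∀ z : ℂ, ‖z‖ < 1 →
      (1 + (starRingEnd ℂ) z ^ 2 - 2 * (α : ℂ) * (starRingEnd ℂ) z) /
          (1 - (starRingEnd ℂ) z ^ 2) =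
        (starRingEnd ℂ) ((1 + z ^ 2 - 2 * (α : ℂ) * z) / (1 - z ^ 2))) ∧
    (∀ z : ℂ, ‖z‖ < 1 → 0 < ((1 + z ^ 2 - 2 * (α : ℂ) * z) / (1 - z ^ 2)).re) ∧
    (∀ z : ℂ, ‖z‖ < 1 →
      ((z * deriv (fun w : ℂ => w * (1 - (α : ℂ) * w) / (1 - w ^ 2)) z).im = 0 ↔
        z.im = 0)) := by
  obtain ⟨hα1, hα2⟩ := hα
  refine ⟨?_, by norm_num, ?_, ?_, ?_⟩
  · intro z hz
    rw [aux_deriv α z hz]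
    have hd := aux_ne z hz
    rw [div_mul_div_comm]
    rw [show (1 - z ^ 2) * (1 - z ^ 2) = (1 - z ^ 2) ^ 2 by ring]
    ring
  · intro z hz
    simp [map_div₀, Complex.conj_ofReal, map_ofNat]
  · intro z hz
    exact aux_repos α hα1 hα2 z hz
  · intro z hz
    rw [aux_deriv α z hz, mul_div_assoc']
    exact aux_im α hα1 hα2 z hz
end
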